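/- Let Z ⊆ A^ℤ be a two-sided subshift in which every periodic point is synchronizing and such that neither Z_ℕ nor Z_{-ℕ} has an isolated periodic point, and let X = Z_ℕ. Then every continuous shift-commuting map φ' : X' → X' extends uniquely to a continuous map φ : X → X with φ ∘ σ = σ ∘ φ, and the extension map φ' ↦ φ is an injective monoid homomorphism from the monoid (under composition) of continuous shift-commuting self-maps of X' into End(X), the monoid of continuous σ-commuting self-maps of X. -/

import Mathlib

open Set

/-- The two-sided shift map on `A^ℤ`: `(tshift x) i = x (i+1)`. -/
def tshift {A : Type*} (x : ℤ → A) : ℤ → A := fun i => x (i + 1)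

/-- A two-sided point is periodic if `σ^n x = x` for some `n ≥ 1`. -/
def TPeriodic {A : Type*} (x : ℤ → A) : Prop := ∃ n : ℕ, 1 ≤ n ∧ tshift^[n] x = x

/-- `Aper X` is the set `X'` of aperiodic points of `X`. -/
def Aper {A : Type*} (X : Set (ℤ → A)) : Set (ℤ → A) := {x ∈ X | ¬ TPeriodic x}

/-- The word `w` occurs in `x` at position `i`. -/
def OccursAt {A : Type*} (w : List A) (x : ℤ → A) (i : ℤ) : Prop :=
  ∀ j : Fin w.length, x (i + (j : ℕ)) = w.get j

/-- The word `w` occurs somewhere in `x`. -/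
def OccursIn {A : Type*} (w : List A) (x : ℤ → A) : Prop := ∃ i : ℤ, OccursAt w x i

/-- The word `w` occurs in some point of `X`. -/
def WordIn {A : Type*} (w : List A) (X : Set (ℤ → A)) : Prop := ∃ x ∈ X, OccursIn w x

/-- `X` is a (two-sided) subshift: a closed shift-invariant subset of the full shift. -/
def IsSubshift {A : Type*} [TopologicalSpace A] (X : Set (ℤ → A)) : Prop :=
  IsClosed X ∧ tshift '' X = X

/-- `X` is an SFT: it is defined by forbidding a finite set of finite words. -/
def IsSFT {A : Type*} (X : Set (ℤ → A)) : Prop :=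
  ∃ F : Set (List A), F.Finite ∧ X = {x | ∀ w ∈ F, ¬ OccursIn w x}

/-- `X` is transitive: any two words of its language can be joined by a connecting word. -/
def IsTransitiveShift {A : Type*} (X : Set (ℤ → A)) : Prop :=
  ∀ u v : List A, WordIn u X → WordIn v X → ∃ w : List A, WordIn (u ++ w ++ v) X

/-- A map between subsets of full shifts is shift-commuting (wherever the shift stays
in the domain set, which is always the case for shift-invariant sets). -/
def ShiftCommuting2 {A B : Type*} {X : Set (ℤ → A)} {Y : Set (ℤ → B)} (f : X → Y) : Prop :=
  ∀ (x : X) (hx : tshift (x : ℤ → A) ∈ X),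
    (f ⟨tshift (x : ℤ → A), hx⟩ : ℤ → B) = tshift (f x : ℤ → B)

/-- `φ : X → Y` restricts (in domain and codomain) to `φ' : X' → Y'`. -/
def RestrictsTo2 {A B : Type*} {X : Set (ℤ → A)} {Y : Set (ℤ → B)}
    (φ : X → Y) (φ' : Aper X → Aper Y) : Prop :=
  ∀ (x : ℤ → A) (hx : x ∈ Aper X), (φ ⟨x, hx.1⟩ : ℤ → B) = (φ' ⟨x, hx⟩ : ℤ → B)


/-- The one-sided shift map on `A^ℕ`. -/
def oshift {A : Type*} (x : ℕ → A) : ℕ → A := fun i => x (i + 1)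

/-- A one-sided point is periodic if `σ^n x = x` for some `n ≥ 1`. -/
def OPeriodic {A : Type*} (x : ℕ → A) : Prop := ∃ n : ℕ, 1 ≤ n ∧ oshift^[n] x = x

/-- `X_ℕ`: the set of right tails `(x_i)_{i ≥ 0}` of points of `X`. -/
def posRay {A : Type*} (X : Set (ℤ → A)) : Set (ℕ → A) :=
  (fun x : ℤ → A => fun n : ℕ => x (n : ℤ)) '' X

/-- `X_{-ℕ}`: the set of left tails `(x_{-i})_{i ≥ 0}` of points of `X`, as a
one-sided system (its shift, shifting in the other direction, becomes `oshift`). -/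
def negRay {A : Type*} (X : Set (ℤ → A)) : Set (ℕ → A) :=
  (fun x : ℤ → A => fun n : ℕ => x (-(n : ℤ))) '' X

/-- A one-sided system `S` has an isolated periodic point. -/
def HasIsolatedPeriodicPt {A : Type*} [TopologicalSpace A] (S : Set (ℕ → A)) : Prop :=
  ∃ x ∈ S, OPeriodic x ∧ ∃ U : Set (ℕ → A), IsOpen U ∧ U ∩ S = {x}

/-- The point `s` is synchronizing in `X`: for some `ℓ`, any two points of `X` agreeing
with `s` on `[-ℓ, ℓ]` can be glued along `s` there. -/
def Synchronizing {A : Type*} (X : Set (ℤ → A)) (s : ℤ → A) : Prop :=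
  ∃ l : ℕ, ∀ x ∈ X, ∀ y ∈ X,
    (∀ i : ℤ, -(l : ℤ) ≤ i ∧ i ≤ (l : ℤ) → x i = s i) →
    (∀ i : ℤ, -(l : ℤ) ≤ i ∧ i ≤ (l : ℤ) → y i = s i) →
    (fun i : ℤ => if i < -(l : ℤ) then x i else if i ≤ (l : ℤ) then s i else y i) ∈ X

/-- `Aper1 X` is the set `X'` of aperiodic points of a one-sided system `X`. -/
def Aper1 {A : Type*} (X : Set (ℕ → A)) : Set (ℕ → A) := {x ∈ X | ¬ OPeriodic x}

/-- A map between subsets of one-sided full shifts is shift-commuting: whenever both `x`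
and `oshift x` lie in the domain set, the map intertwines the shifts there. -/
def ShiftCommuting1 {A B : Type*} {X : Set (ℕ → A)} {Y : Set (ℕ → B)} (f : X → Y) : Prop :=
  ∀ (x : X) (hx : oshift (x : ℕ → A) ∈ X),
    (f ⟨oshift (x : ℕ → A), hx⟩ : ℕ → B) = oshift (f x : ℕ → B)

/-- `φ : X → Y` restricts (in domain and codomain) to `φ' : X' → Y'` (one-sided). -/
def RestrictsTo1 {A B : Type*} {X : Set (ℕ → A)} {Y : Set (ℕ → B)}
    (φ : X → Y) (φ' : Aper1 X → Aper1 Y) : Prop :=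
  ∀ (x : ℕ → A) (hx : x ∈ Aper1 X), (φ ⟨x, hx.1⟩ : ℕ → B) = (φ' ⟨x, hx⟩ : ℕ → B)

/-- `Y` is a one-sided subshift: closed and invariant under the one-sided shift. -/
def IsSubshift1 {A : Type*} [TopologicalSpace A] (Y : Set (ℕ → A)) : Prop :=
  IsClosed Y ∧ oshift '' Y ⊆ Y


namespace S9

variable {A : Type*}

/-- Two one-sided points agree on the first `R+1` coordinates. -/
def agree (x y : ℕ → A) (R : ℕ) : Prop := ∀ i, i ≤ R → x i = y i

lemma agree_refl (x : ℕ → A) (R : ℕ) : agree x x R := fun _ _ => rfl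

lemma agree.symm {x y : ℕ → A} {R : ℕ} (h : agree x y R) : agree y x R :=
  fun i hi => (h i hi).symm

lemma agree.mono {x y : ℕ → A} {R R' : ℕ} (h : agree x y R) (hle : R' ≤ R) : agree x y R' :=
  fun i hi => h i (hi.trans hle)

lemma agree.trans {x y z : ℕ → A} {R : ℕ} (h1 : agree x y R) (h2 : agree y z R) :
    agree x z R := fun i hi => (h1 i hi).trans (h2 i hi)

section Top

variable [TopologicalSpace A] [DiscreteTopology A]

lemma isOpen_cyl (x : ℕ → A) (R : ℕ) : IsOpen {w : ℕ → A | agree w x R} := by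
  have h : {w : ℕ → A | agree w x R}
      = ⋂ i ∈ Finset.range (R + 1), (fun w : ℕ → A => w i) ⁻¹' {x i} := by
    ext w
    simp only [Set.mem_setOf_eq, Set.mem_iInter, Set.mem_preimage, Set.mem_singleton_iff,
      Finset.mem_range, Nat.lt_succ_iff]
    exact ⟨fun h i hi => h i hi, fun h i hi => h i hi⟩
  rw [h]
  exact isOpen_biInter_finset fun i _ =>
    (continuous_apply i).isOpen_preimage _ (isOpen_discrete _)

lemma exists_cyl_subset {S : Set (ℕ → A)} {x : ↥S} {W : Set ↥S} (hW : IsOpen W) (hx : x ∈ W) :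
    ∃ N, ∀ y : ↥S, agree (y : ℕ → A) (x : ℕ → A) N → y ∈ W := by
  obtain ⟨V, hVopen, hVW⟩ := isOpen_induced_iff.1 hW
  have hxV : (x : ℕ → A) ∈ V := by
    have : x ∈ (fun y : ↥S => (y : ℕ → A)) ⁻¹' V := by rw [hVW]; exact hx
    exact this
  obtain ⟨I, u, hu, hsub⟩ := isOpen_pi_iff.1 hVopen _ hxV
  refine ⟨I.sup id, fun y hy => ?_⟩
  have : (y : ℕ → A) ∈ V := by
    apply hsub
    intro i hi
    have hiI : i ∈ I := hi
    have : (y : ℕ → A) i = (x : ℕ → A) i := hy i (Finset.le_sup (f := id) hiI)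
    rw [this]
    exact (hu i hiI).2
  rw [← hVW]
  exact this

/-- A continuous map between subsets of one-sided shift spaces admits a pointwise
modulus of continuity in terms of `agree`. -/
lemma cont_modulus {S T : Set (ℕ → A)} {f : ↥S → ↥T} (hf : Continuous f) (x : ↥S) (m : ℕ) :
    ∃ N, ∀ y : ↥S, agree (y : ℕ → A) (x : ℕ → A) N →
      agree (f y : ℕ → A) (f x : ℕ → A) m := by
  have hop : IsOpen (f ⁻¹' ((fun w : ↥T => (w : ℕ → A)) ⁻¹'
      {w : ℕ → A | agree w (f x : ℕ → A) m})) :=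
    (((isOpen_cyl _ _).preimage continuous_subtype_val).preimage hf)
  obtain ⟨N, hN⟩ := exists_cyl_subset hop (by exact agree_refl _ _)
  exact ⟨N, fun y hy => hN y hy⟩

lemma continuous_of_modulus {S T : Set (ℕ → A)} {f : ↥S → ↥T}
    (h : ∀ x : ↥S, ∀ m : ℕ, ∃ N, ∀ y : ↥S, agree (y : ℕ → A) (x : ℕ → A) N →
      agree (f y : ℕ → A) (f x : ℕ → A) m) : Continuous f := by
  refine continuous_induced_rng.2 (continuous_pi fun i => ?_)
  rw [continuous_discrete_rng]
  intro b
  rw [isOpen_iff_mem_nhds]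
  intro x hx
  obtain ⟨N, hN⟩ := h x i
  have hsub : {y : ↥S | agree (y : ℕ → A) (x : ℕ → A) N}
      ⊆ (fun w : ↥S => (Subtype.val ∘ f) w i) ⁻¹' {b} := by
    intro y hy
    simp only [Set.mem_preimage, Function.comp_apply, Set.mem_singleton_iff] at hx ⊢
    exact (hN y hy i le_rfl).trans hx
  have hopen : IsOpen {y : ↥S | agree (y : ℕ → A) (x : ℕ → A) N} :=
    (isOpen_cyl _ _).preimage continuous_subtype_val
  exact Filter.mem_of_superset (hopen.mem_nhds (agree_refl _ _)) hsub

end Top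

lemma oshift_iter (x : ℕ → A) (k i : ℕ) : (oshift^[k] x) i = x (i + k) := by
  induction k generalizing x i with
  | zero => simp
  | succ k ih =>
    rw [Function.iterate_succ_apply]
    rw [ih (oshift x) i]
    show x (i + k + 1) = x (i + (k + 1))
    congr 1

lemma tshift_iter (z : ℤ → A) (k : ℕ) (i : ℤ) : (tshift^[k] z) i = z (i + k) := by
  induction k generalizing z i with
  | zero => simp
  | succ k ih =>
    rw [Function.iterate_succ_apply, ih (tshift z) i]
    show z (i + (k : ℤ) + 1) = z (i + ((k : ℕ) + 1 : ℕ))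
    congr 1
    push_cast
    ring

lemma operiodic_shift {x : ℕ → A} (h : OPeriodic x) (c : ℕ) : OPeriodic (oshift^[c] x) := by
  obtain ⟨q, hq1, hq⟩ := h
  refine ⟨q, hq1, ?_⟩
  rw [← Function.iterate_add_apply, Nat.add_comm, Function.iterate_add_apply, hq]

/-- If a later shift of `x` is aperiodic then so are all earlier ones. -/
lemma aper_of_shift_aper {x : ℕ → A} {C c : ℕ} (hc : c ≤ C)
    (h : ¬ OPeriodic (oshift^[C] x)) : ¬ OPeriodic (oshift^[c] x) := by
  intro hp
  apply h
  have := operiodic_shift hp (C - c)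
  rwa [← Function.iterate_add_apply, Nat.sub_add_cancel hc] at this

lemma per_add {x : ℕ → A} {n : ℕ} (h : oshift^[n] x = x) (i : ℕ) : x (i + n) = x i := by
  have := congrFun h i
  rwa [oshift_iter] at this

lemma per_add_mul {x : ℕ → A} {n : ℕ} (h : oshift^[n] x = x) (i c : ℕ) :
    x (i + c * n) = x i := by
  induction c with
  | zero => simp
  | succ c ih =>
    have : i + (c + 1) * n = (i + c * n) + n := by ring
    rw [this, per_add h, ih]

lemma per_mod {x : ℕ → A} {n : ℕ} (h : oshift^[n] x = x) (i : ℕ) : x (i % n) = x i := by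
  conv_rhs => rw [← Nat.mod_add_div' i n]
  rw [per_add_mul h]

end S9

set_option linter.unusedSectionVars false

namespace S9

variable {A : Type*}

section ZLem

variable [TopologicalSpace A] [DiscreteTopology A] {Z : Set (ℤ → A)}

lemma mem_shiftZ (hZ : IsSubshift Z) {z : ℤ → A} (hz : z ∈ Z) (k : ℤ) :
    (fun i => z (i + k)) ∈ Z := by
  induction k using Int.induction_on with
  | zero => simpa using hz
  | succ k ih =>
    have he : (fun i : ℤ => z (i + ((k : ℤ) + 1))) = tshift (fun i : ℤ => z (i + k)) := by
      funext i
      show z (i + (k + 1)) = z (i + 1 + k)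
      congr 1
      ring
    rw [he, ← hZ.2]
    exact Set.mem_image_of_mem tshift ih
  | pred k ih =>
    have := ih
    rw [← hZ.2] at this
    obtain ⟨w, hwZ, hw⟩ := this
    have hwe : w = fun i : ℤ => z (i + (-(k : ℤ) - 1)) := by
      funext i
      have := congrFun hw (i - 1)
      show w i = z (i + (-(k:ℤ) - 1))
      have h2 : w i = tshift w (i - 1) := by
        show w i = w (i - 1 + 1)
        congr 1
        ring
      rw [h2, this]
      congr 1
      ring
    rw [← hwe]
    exact hwZ

lemma mem_of_approx (hZc : IsClosed Z) (w : ℤ → A)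
    (h : ∀ M : ℕ, ∃ z ∈ Z, ∀ i : ℤ, i.natAbs ≤ M → z i = w i) : w ∈ Z := by
  rw [← hZc.closure_eq]
  rw [mem_closure_iff]
  intro U hU hwU
  obtain ⟨I, u, hu, hsub⟩ := isOpen_pi_iff.1 hU w hwU
  obtain ⟨z, hzZ, hz⟩ := h (I.sup Int.natAbs)
  refine ⟨z, ?_, hzZ⟩
  apply hsub
  intro i hi
  rw [hz i (Finset.le_sup (f := Int.natAbs) hi)]
  exact (hu i hi).2

lemma ray_mem_posRay {z : ℤ → A} (hz : z ∈ Z) : (fun j : ℕ => z (j : ℤ)) ∈ posRay Z :=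
  ⟨z, hz, rfl⟩

lemma posRay_lift {y : ℕ → A} (hy : y ∈ posRay Z) :
    ∃ z ∈ Z, ∀ j : ℕ, z (j : ℤ) = y j := by
  obtain ⟨z, hz, hzy⟩ := hy
  exact ⟨z, hz, fun j => congrFun hzy j⟩

lemma negRay_lift {y : ℕ → A} (hy : y ∈ negRay Z) :
    ∃ z ∈ Z, ∀ j : ℕ, z (-(j : ℤ)) = y j := by
  obtain ⟨z, hz, hzy⟩ := hy
  exact ⟨z, hz, fun j => congrFun hzy j⟩

lemma oshift_posRay (hZ : IsSubshift Z) {y : ℕ → A} (hy : y ∈ posRay Z) :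
    oshift y ∈ posRay Z := by
  obtain ⟨z, hzZ, hzy⟩ := posRay_lift hy
  have hm : (fun i : ℤ => z (i + 1)) ∈ Z := mem_shiftZ hZ hzZ 1
  refine ⟨_, hm, ?_⟩
  funext j
  show z ((j : ℤ) + 1) = oshift y j
  show z ((j : ℤ) + 1) = y (j + 1)
  rw [← hzy (j + 1)]
  norm_cast

lemma oshift_iter_posRay (hZ : IsSubshift Z) {y : ℕ → A} (hy : y ∈ posRay Z) (c : ℕ) :
    oshift^[c] y ∈ posRay Z := by
  induction c with
  | zero => simpa using hy
  | succ c ih =>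
    rw [Function.iterate_succ_apply']
    exact oshift_posRay hZ ih

/-- From non-isolation, points of `S` arbitrarily close to a periodic point. -/
lemma nonisolated {S : Set (ℕ → A)} (hS : ¬ HasIsolatedPeriodicPt S) {x : ℕ → A}
    (hx : x ∈ S) (hper : OPeriodic x) (M : ℕ) : ∃ q ∈ S, q ≠ x ∧ agree q x M := by
  by_contra hc
  push_neg at hc
  apply hS
  refine ⟨x, hx, hper, {w : ℕ → A | agree w x M}, isOpen_cyl x M, ?_⟩
  ext w
  simp only [Set.mem_inter_iff, Set.mem_setOf_eq, Set.mem_singleton_iff]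
  constructor
  · rintro ⟨hw1, hw2⟩
    by_contra hne
    exact hc w hw2 hne hw1
  · rintro rfl
    exact ⟨agree_refl _ _, hx⟩

end ZLem

/-- The two-sided periodization of a one-sided periodic point. -/
def sPer (p : ℕ → A) (n : ℕ) : ℤ → A := fun i => p ((i % (n : ℤ)).toNat)

section SPer

variable {p : ℕ → A} {n : ℕ} (hn : 1 ≤ n) (hp : oshift^[n] p = p)
include hn hp

lemma sPer_eq {i : ℤ} {j : ℕ} (hd : (n : ℤ) ∣ (i - j)) : sPer p n i = p j := by
  have hn' : (0 : ℤ) < n := by exact_mod_cast hn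
  have h1 : i % (n : ℤ) = (j : ℤ) % (n : ℤ) :=
    Int.emod_eq_emod_iff_emod_sub_eq_zero.2 (Int.emod_eq_zero_of_dvd hd)
  have h2 : ((j : ℤ) % (n : ℤ)) = ((j % n : ℕ) : ℤ) := by push_cast; rfl
  have h3 : (i % (n : ℤ)).toNat = j % n := by
    rw [h1, h2]
    exact Int.toNat_natCast _
  rw [sPer, h3, per_mod hp]

lemma sPer_congr {a b : ℤ} (hd : (n : ℤ) ∣ (a - b)) : sPer p n a = sPer p n b := by
  have hn' : (0 : ℤ) < n := by exact_mod_cast hn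
  have hb : (0 : ℤ) ≤ b % n := Int.emod_nonneg b (by omega)
  set j : ℕ := (b % (n : ℤ)).toNat with hj
  have hjb : ((j : ℤ)) = b % n := Int.toNat_of_nonneg hb
  have hdbj : (n : ℤ) ∣ (b - j) := by
    rw [hjb]
    exact Int.dvd_self_sub_of_emod_eq rfl
  have hdaj : (n : ℤ) ∣ (a - j) := by
    have : a - (j : ℤ) = (a - b) + (b - j) := by ring
    rw [this]
    exact dvd_add hd hdbj
  rw [sPer_eq hn hp hdaj, sPer_eq hn hp hdbj]

lemma sPer_ray (j : ℕ) : sPer p n (j : ℤ) = p j :=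
  sPer_eq hn hp (by simp)

lemma sPer_TPer : TPeriodic (sPer p n) := by
  refine ⟨n, hn, ?_⟩
  funext i
  rw [tshift_iter]
  exact sPer_congr hn hp (by push_cast; ring_nf; exact Int.dvd_refl _)

variable [TopologicalSpace A] [DiscreteTopology A] {Z : Set (ℤ → A)}

lemma sPer_mem (hZ : IsSubshift Z) (hpX : p ∈ posRay Z) : sPer p n ∈ Z := by
  obtain ⟨z, hzZ, hz⟩ := posRay_lift hpX
  apply mem_of_approx hZ.1
  intro M
  refine ⟨fun i => z (i + (M : ℤ) * n), mem_shiftZ hZ hzZ _, ?_⟩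
  intro i hi
  have hge : 0 ≤ i + (M : ℤ) * n := by
    have : (i.natAbs : ℤ) ≤ M := by exact_mod_cast hi
    have h2 : -(M : ℤ) ≤ i := by omega
    have h3 : (M : ℤ) ≤ (M : ℤ) * n := by nlinarith [Int.ofNat_le.2 hn]
    omega
  set j : ℕ := (i + (M : ℤ) * n).toNat with hjdef
  have hj : ((j : ℤ)) = i + (M : ℤ) * n := Int.toNat_of_nonneg hge
  have h1 : z (i + (M : ℤ) * n) = p j := by
    rw [← hj, hz j]
  show z (i + (M : ℤ) * n) = sPer p n i
  rw [h1]
  exact (sPer_eq hn hp (by rw [hj]; exact ⟨-M, by ring⟩)).symm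

end SPer

/-- A one-sided point that eventually agrees with an `n`-periodic pattern but differs
from the pattern somewhere is aperiodic. -/
lemma aper_gen {w : ℕ → A} {p : ℕ → A} {n : ℕ} (hn : 1 ≤ n) (hp : oshift^[n] p = p)
    {B : ℕ} {δ : ℕ} (htail : ∀ i : ℕ, B ≤ i → w i = sPer p n ((i : ℤ) - δ))
    {D : ℕ} (hD : w D ≠ sPer p n ((D : ℤ) - δ)) : ¬ OPeriodic w := by
  rintro ⟨q, hq1, hq⟩
  apply hD
  have key : w D = w (D + q * n * (B + 1)) := by
    have : ∀ c : ℕ, w (D + c * q) = w D := by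
      intro c
      induction c with
      | zero => simp
      | succ c ih =>
        have he : D + (c + 1) * q = (D + c * q) + q := by ring
        rw [he, per_add hq, ih]
    have h2 := this (n * (B + 1))
    rw [← h2]
    congr 1
    ring
  have hK : B + 1 ≤ q * n * (B + 1) := by
    have h1 : 1 * 1 ≤ q * n := Nat.mul_le_mul hq1 hn
    calc B + 1 = 1 * (B + 1) := by ring
      _ ≤ q * n * (B + 1) := Nat.mul_le_mul_right _ (by omega)
  rw [key, htail _ (by linarith [hK])]
  exact sPer_congr hn hp ⟨q * (B + 1), by push_cast; ring⟩

/-- Iterating the shift-commuting property along an orbit staying in the aperiodic part. -/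
lemma chainSC {X : Set (ℕ → A)} {f : ↥(Aper1 X) → ↥(Aper1 X)} (hf : ShiftCommuting1 f)
    {w : ℕ → A} (C : ℕ) (hw : ∀ c, c ≤ C → oshift^[c] w ∈ Aper1 X) :
    ((f ⟨oshift^[C] w, hw C le_rfl⟩ : ℕ → A)) = oshift^[C] (f ⟨w, hw 0 (Nat.zero_le _)⟩ : ℕ → A) := by
  induction C with
  | zero => rfl
  | succ C ih =>
    have hw' : ∀ c, c ≤ C → oshift^[c] w ∈ Aper1 X := fun c hc => hw c (hc.trans (Nat.le_succ _))
    have hx : oshift (oshift^[C] w) ∈ Aper1 X := by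
      have hmem := hw (C + 1) le_rfl
      rwa [Function.iterate_succ_apply'] at hmem
    have harg : (⟨oshift^[C+1] w, hw (C+1) le_rfl⟩ : ↥(Aper1 X))
        = ⟨oshift (oshift^[C] w), hx⟩ := by
      apply Subtype.ext
      exact Function.iterate_succ_apply' oshift C w
    rw [harg]
    have := hf ⟨oshift^[C] w, hw' C le_rfl⟩ hx
    rw [this]
    have harg2 : (⟨oshift^[C] w, hw' C le_rfl⟩ : ↥(Aper1 X)) = ⟨oshift^[C] w, hw C (Nat.le_succ _)⟩ := rfl
    rw [Function.iterate_succ_apply']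
    exact congrArg oshift (ih hw')

end S9

set_option linter.unusedSectionVars false
set_option maxHeartbeats 1000000

namespace S9

variable {A : Type*} [TopologicalSpace A] [DiscreteTopology A] {Z : Set (ℤ → A)}

/-- Main local-value lemma: near a periodic point `p` of `X = Z_ℕ`, the value of any
continuous shift-commuting `φ'` on aperiodic points close to `p` is asymptotically a
single point `V`. -/
lemma Emain (hZ : IsSubshift Z)
    (hsync : ∀ s ∈ Z, TPeriodic s → Synchronizing Z s)
    (h2 : ¬ HasIsolatedPeriodicPt (negRay Z))
    (φ' : {f : ↥(Aper1 (posRay Z)) → ↥(Aper1 (posRay Z)) // Continuous f ∧ ShiftCommuting1 f})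
    {p : ℕ → A} (hpX : p ∈ posRay Z) (hper : OPeriodic p) :
    ∃ V ∈ posRay Z, ∀ m : ℕ, ∃ R : ℕ, ∀ y (hy : y ∈ Aper1 (posRay Z)), agree y p R →
      agree ((φ'.1 ⟨y, hy⟩ : ℕ → A)) V m := by
  classical
  obtain ⟨n, hn, hpn⟩ := hper
  have hsZ : sPer p n ∈ Z := sPer_mem hn hpn hZ hpX
  obtain ⟨ℓ, hglue⟩ := hsync (sPer p n) hsZ (sPer_TPer hn hpn)
  set s : ℤ → A := sPer p n with hs
  -- window offset t : a multiple of n with ℓ < t ≤ ℓ + n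
  set t : ℕ := n * (ℓ / n + 1) with ht
  have htdm := Nat.div_add_mod ℓ n
  have htmod := Nat.mod_lt ℓ (show 0 < n by omega)
  have hteq : t = n * (ℓ / n) + n := by rw [ht]; ring
  have htl : ℓ < t := by omega
  have htu : t ≤ ℓ + n := by omega
  have htdvd : (n : ℤ) ∣ (t : ℤ) := ⟨((ℓ / n : ℕ) + 1 : ℕ), by push_cast [ht]; ring⟩
  -- the defect object from h2
  set sneg : ℕ → A := fun j => s (-(j : ℤ)) with hsnegdef
  have hsnegR : sneg ∈ negRay Z := ⟨s, hsZ, rfl⟩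
  have hsnegP : OPeriodic sneg := by
    refine ⟨n, hn, ?_⟩
    funext j
    rw [oshift_iter]
    show s (-(((j + n) : ℕ) : ℤ)) = s (-(j : ℤ))
    exact sPer_congr hn hpn ⟨-1, by push_cast; ring⟩
  obtain ⟨q, hqR, hqne, hqag⟩ := nonisolated h2 hsnegR hsnegP (2 * ℓ + n + 1)
  have hqex : ∃ j, q j ≠ sneg j := Function.ne_iff.1 hqne
  set e : ℕ := Nat.find hqex with he
  have he_spec : q e ≠ sneg e := Nat.find_spec hqex
  have he_min : ∀ j, j < e → q j = sneg j := fun j hj => not_not.1 (Nat.find_min hqex hj)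
  have he_gt : 2 * ℓ + n + 1 < e := by
    by_contra hc
    push_neg at hc
    exact he_spec (hqag e hc)
  obtain ⟨zq, hzqZ, hzq⟩ := negRay_lift hqR
  -- u : the left-defect point shifted so its window sits at 0
  have huZ : (fun i : ℤ => zq (i + -(t : ℤ))) ∈ Z := mem_shiftZ hZ hzqZ _
  have window_u : ∀ i : ℤ, -(ℓ : ℤ) ≤ i ∧ i ≤ (ℓ : ℤ) →
      (fun i : ℤ => zq (i + -(t : ℤ))) i = s i := by
    rintro i ⟨hi1, hi2⟩
    have hel : (ℓ : ℤ) < e := by exact_mod_cast (by omega : ℓ < e)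
    have h0 : (0 : ℤ) ≤ (t : ℤ) - i := by
      have : (ℓ : ℤ) < t := by exact_mod_cast htl
      omega
    set j : ℕ := ((t : ℤ) - i).toNat with hj
    have hjeq : (j : ℤ) = (t : ℤ) - i := Int.toNat_of_nonneg h0
    have hje : j < e := by
      have h1 : (j : ℤ) ≤ (t : ℤ) + ℓ := by omega
      have h2' : (t : ℤ) + ℓ ≤ 2 * ℓ + n := by
        have : (t : ℤ) ≤ (ℓ : ℤ) + n := by exact_mod_cast htu
        push_cast
        omega
      have h3 : ((2 * ℓ + n + 1 : ℕ) : ℤ) < e := by exact_mod_cast he_gt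
      have : (j : ℤ) < (e : ℤ) := by push_cast at h3 ⊢; omega
      exact_mod_cast this
    have step1 : zq (i + -(t : ℤ)) = zq (-(j : ℤ)) := by congr 1; omega
    show zq (i + -(t : ℤ)) = s i
    rw [step1, hzq j, he_min j hje]
    show s (-(j : ℤ)) = s i
    apply sPer_congr hn hpn
    have hdiff : -(j : ℤ) - i = -(t : ℤ) := by omega
    rw [hdiff]
    exact dvd_neg.2 htdvd
  have hG1 : (fun i : ℤ => if i < -(ℓ : ℤ) then (fun i : ℤ => zq (i + -(t : ℤ))) i
      else if i ≤ (ℓ : ℤ) then s i else s i) ∈ Z :=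
    hglue _ huZ s hsZ window_u (fun i _ => rfl)
  -- v : junk, defect at -e, s on (-e, ∞)
  set v : ℤ → A := fun i : ℤ =>
    (fun i : ℤ => if i < -(ℓ : ℤ) then (fun i : ℤ => zq (i + -(t : ℤ))) i
      else if i ≤ (ℓ : ℤ) then s i else s i) (i + (t : ℤ)) with hv
  have hvZ : v ∈ Z := mem_shiftZ hZ hG1 _
  have hv1 : ∀ i : ℤ, -(e : ℤ) < i → v i = s i := by
    intro i hi
    rw [hv]
    simp only
    by_cases h1 : i + (t : ℤ) < -(ℓ : ℤ)
    · rw [if_pos h1]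
      have hi0 : i < 0 := by
        have : (0 : ℤ) ≤ (t : ℤ) + ℓ := by positivity
        omega
      set j : ℕ := (-i).toNat with hj
      have hjeq : (j : ℤ) = -i := Int.toNat_of_nonneg (by omega)
      have hje : j < e := by
        have : (j : ℤ) < (e : ℤ) := by omega
        exact_mod_cast this
      have step1 : zq (i + (t : ℤ) + -(t : ℤ)) = zq (-(j : ℤ)) := by congr 1; omega
      rw [step1, hzq j, he_min j hje]
      show s (-(j : ℤ)) = s i
      have : -(j : ℤ) = i := by omega
      rw [this]
    · rw [if_neg h1]
      have : (if i + (t : ℤ) ≤ (ℓ : ℤ) then s (i + (t : ℤ)) else s (i + (t : ℤ))) = s (i + (t : ℤ)) := by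
        split <;> rfl
      rw [this]
      exact sPer_congr hn hpn (by simpa using htdvd)
  have hv2 : v (-(e : ℤ)) ≠ s (-(e : ℤ)) := by
    rw [hv]
    simp only
    have h1 : -(e : ℤ) + (t : ℤ) < -(ℓ : ℤ) := by
      have h2' : (t : ℤ) ≤ (ℓ : ℤ) + n := by exact_mod_cast htu
      have h3 : ((2 * ℓ + n + 1 : ℕ) : ℤ) < e := by exact_mod_cast he_gt
      push_cast at h3
      omega
    rw [if_pos h1]
    have step1 : zq (-(e : ℤ) + (t : ℤ) + -(t : ℤ)) = zq (-(e : ℤ)) := by congr 1; ring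
    rw [step1, hzq e]
    exact he_spec
  -- the reference aperiodic point ρ
  set KN : ℕ := (e + 1) * n with hKN
  have hKNe : e + 1 ≤ KN := by
    calc e + 1 = (e + 1) * 1 := by ring
      _ ≤ (e + 1) * n := Nat.mul_le_mul_left _ hn
  set β : ℕ := KN - e with hβ
  have hβeq : (β : ℤ) = (KN : ℤ) - e := by push_cast [hβ]; omega
  set ρ : ℕ → A := fun j : ℕ => v ((j : ℤ) + -(KN : ℤ)) with hρ
  have hρmem : ρ ∈ posRay Z := ray_mem_posRay (mem_shiftZ hZ hvZ _)
  have hρ_tail : ∀ j : ℕ, β < j → ρ j = s ((j : ℤ) - KN) := by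
    intro j hj
    rw [hρ]
    simp only
    have harg : (j : ℤ) + -(KN : ℤ) = (j : ℤ) - KN := by ring
    rw [harg]
    exact hv1 _ (by omega)
  have hρ_tailp : ∀ j : ℕ, β < j → ρ j = p j := by
    intro j hj
    rw [hρ_tail j hj]
    exact sPer_eq hn hpn ⟨-(e + 1 : ℤ), by push_cast [hKN]; ring⟩
  have hρD : ρ β ≠ s ((β : ℤ) - KN) := by
    have hb : (β : ℤ) + -(KN : ℤ) = -(e : ℤ) := by omega
    rw [hρ]
    simp only
    rw [hb]
    have hb2 : (β : ℤ) - KN = -(e : ℤ) := by omega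
    rw [hb2]
    exact hv2
  have hρaper : ¬ OPeriodic ρ := by
    refine aper_gen hn hpn (B := β + 1) (δ := KN) ?_ (D := β) hρD
    intro i hi
    rw [hρ_tail i (by omega)]
  have hρA : ρ ∈ Aper1 (posRay Z) := ⟨hρmem, hρaper⟩
  -- the value point V
  refine ⟨oshift^[KN + t] ((φ'.1 ⟨ρ, hρA⟩ : ℕ → A)),
    oshift_iter_posRay hZ (φ'.1 ⟨ρ, hρA⟩).2.1 _, ?_⟩
  intro m
  obtain ⟨N, hN⟩ := cont_modulus φ'.2.1 ⟨ρ, hρA⟩ (KN + t + m)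
  refine ⟨N + 2 * ℓ + 2 * n + 1, ?_⟩
  set R : ℕ := N + 2 * ℓ + 2 * n + 1 with hR
  intro y hy hagree
  obtain ⟨zy, hzyZ, hzy⟩ := posRay_lift hy.1
  -- glue a copy of s to the past of y
  have hu'Z : (fun i : ℤ => zy (i + (t : ℤ))) ∈ Z := mem_shiftZ hZ hzyZ _
  have window_u' : ∀ i : ℤ, -(ℓ : ℤ) ≤ i ∧ i ≤ (ℓ : ℤ) →
      (fun i : ℤ => zy (i + (t : ℤ))) i = s i := by
    rintro i ⟨hi1, hi2⟩
    have h0 : (0 : ℤ) ≤ i + t := by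
      have : (ℓ : ℤ) < t := by exact_mod_cast htl
      omega
    set j : ℕ := (i + (t : ℤ)).toNat with hj
    have hjeq : (j : ℤ) = i + t := Int.toNat_of_nonneg h0
    have hjR : j ≤ R := by
      have h2' : (t : ℤ) ≤ (ℓ : ℤ) + n := by exact_mod_cast htu
      have : (j : ℤ) ≤ ((R : ℕ) : ℤ) := by push_cast [hR]; omega
      exact_mod_cast this
    show zy (i + (t : ℤ)) = s i
    have step1 : zy (i + (t : ℤ)) = zy (j : ℤ) := by congr 1; omega
    rw [step1, hzy j, hagree j hjR]
    have : p j = s (j : ℤ) := (sPer_ray hn hpn j).symm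
    rw [this]
    exact sPer_congr hn hpn (by rw [hjeq]; simpa using (dvd_neg.2 htdvd))
  have hG2 : (fun i : ℤ => if i < -(ℓ : ℤ) then s i
      else if i ≤ (ℓ : ℤ) then s i else (fun i : ℤ => zy (i + (t : ℤ))) i) ∈ Z :=
    hglue s hsZ _ hu'Z (fun i _ => rfl) window_u'
  set wy : ℤ → A := fun i : ℤ =>
    (fun i : ℤ => if i < -(ℓ : ℤ) then s i
      else if i ≤ (ℓ : ℤ) then s i else (fun i : ℤ => zy (i + (t : ℤ))) i) (i + -(t : ℤ)) with hwy
  have hwyZ : wy ∈ Z := mem_shiftZ hZ hG2 _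
  have hwy_low : ∀ i : ℤ, i ≤ (t : ℤ) + ℓ → wy i = s i := by
    intro i hi
    rw [hwy]
    simp only
    have hbr : ¬ ((ℓ : ℤ) < i + -(t : ℤ)) := by omega
    by_cases h1 : i + -(t : ℤ) < -(ℓ : ℤ)
    · rw [if_pos h1]
      exact sPer_congr hn hpn (by simpa using (dvd_neg.2 htdvd))
    · rw [if_neg h1, if_pos (by omega)]
      exact sPer_congr hn hpn (by simpa using (dvd_neg.2 htdvd))
  have hwy_high : ∀ i : ℤ, (t : ℤ) + ℓ < i → wy i = zy i := by
    intro i hi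
    rw [hwy]
    simp only
    rw [if_neg (by omega), if_neg (by omega)]
    congr 1
    ring
  have hwy_ray : ∀ j : ℕ, wy (j : ℤ) = y j := by
    intro j
    by_cases hk : (j : ℤ) ≤ (t : ℤ) + ℓ
    · rw [hwy_low _ hk]
      have hjR : j ≤ R := by
        have : (j : ℤ) ≤ ((R : ℕ) : ℤ) := by
          have h2' : (t : ℤ) ≤ (ℓ : ℤ) + n := by exact_mod_cast htu
          push_cast [hR]; omega
        exact_mod_cast this
      have hps : s (j : ℤ) = p j := sPer_ray hn hpn j
      rw [hps]
      exact (hagree j hjR).symm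
    · rw [hwy_high _ (by omega), hzy j]
  -- glue v (defect in the past) to (a shifted copy of) wy
  have hWrZ : (fun i : ℤ => wy (i + -(t : ℤ))) ∈ Z := mem_shiftZ hZ hwyZ _
  have window_Wr : ∀ i : ℤ, -(ℓ : ℤ) ≤ i ∧ i ≤ (ℓ : ℤ) →
      (fun i : ℤ => wy (i + -(t : ℤ))) i = s i := by
    rintro i ⟨hi1, hi2⟩
    show wy (i + -(t : ℤ)) = s i
    rw [hwy_low _ (by omega)]
    exact sPer_congr hn hpn (by simpa using (dvd_neg.2 htdvd))
  have window_v : ∀ i : ℤ, -(ℓ : ℤ) ≤ i ∧ i ≤ (ℓ : ℤ) → v i = s i := by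
    rintro i ⟨hi1, hi2⟩
    apply hv1
    have h3 : ((2 * ℓ + n + 1 : ℕ) : ℤ) < e := by exact_mod_cast he_gt
    push_cast at h3
    omega
  have hΞ : (fun i : ℤ => if i < -(ℓ : ℤ) then v i
      else if i ≤ (ℓ : ℤ) then s i else (fun i : ℤ => wy (i + -(t : ℤ))) i) ∈ Z :=
    hglue v hvZ _ hWrZ window_v window_Wr
  set Ξ : ℤ → A := fun i : ℤ => if i < -(ℓ : ℤ) then v i
      else if i ≤ (ℓ : ℤ) then s i else wy (i + -(t : ℤ)) with hΞdef
  have hΞZ : Ξ ∈ Z := hΞ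
  set χ : ℕ → A := fun j : ℕ => Ξ ((j : ℤ) + -(KN : ℤ)) with hχ
  have hχmem : χ ∈ posRay Z := ray_mem_posRay (mem_shiftZ hZ hΞZ _)
  -- σ^{KN+t} χ = y
  have hχy : oshift^[KN + t] χ = y := by
    funext j
    rw [oshift_iter]
    show Ξ ((((j + (KN + t)) : ℕ) : ℤ) + -(KN : ℤ)) = y j
    have harg : (((j + (KN + t)) : ℕ) : ℤ) + -(KN : ℤ) = (j : ℤ) + t := by push_cast; ring
    rw [harg, hΞdef]
    simp only
    have hℓt : ¬ ((j : ℤ) + t < -(ℓ : ℤ)) := by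
      have : (0:ℤ) ≤ (j : ℤ) + t := by positivity
      omega
    have hℓt2 : ¬ ((j : ℤ) + t ≤ (ℓ : ℤ)) := by
      have : (ℓ : ℤ) < t := by exact_mod_cast htl
      omega
    rw [if_neg hℓt, if_neg hℓt2]
    have harg2 : (j : ℤ) + t + -(t : ℤ) = (j : ℤ) := by ring
    rw [harg2, hwy_ray j]
  -- χ agrees with ρ far out
  have hχρ : agree χ ρ (KN + t + R) := by
    intro j hj
    rw [hχ, hρ]
    simp only
    set i : ℤ := (j : ℤ) + -(KN : ℤ) with hi
    show Ξ i = v i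
    have hiub : i ≤ (t : ℤ) + R := by
      have : (j : ℤ) ≤ ((KN + t + R : ℕ) : ℤ) := by exact_mod_cast hj
      push_cast at this
      omega
    rw [hΞdef]
    simp only
    by_cases h1 : i < -(ℓ : ℤ)
    · rw [if_pos h1]
    · rw [if_neg h1]
      push_neg at h1
      have hie : -(e : ℤ) < i := by
        have h3 : ((2 * ℓ + n + 1 : ℕ) : ℤ) < e := by exact_mod_cast he_gt
        push_cast at h3
        omega
      by_cases h2 : i ≤ (ℓ : ℤ)
      · rw [if_pos h2, hv1 _ hie]
      · rw [if_neg h2]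
        push_neg at h2
        by_cases h3 : i + -(t : ℤ) ≤ (t : ℤ) + ℓ
        · rw [hwy_low _ h3, hv1 _ hie]
          exact sPer_congr hn hpn (by simpa using (dvd_neg.2 htdvd))
        · push_neg at h3
          rw [hwy_high _ h3]
          have h0 : (0 : ℤ) ≤ i + -(t : ℤ) := by
            have : (0:ℤ) < (t:ℤ) + ℓ := by
              have : (ℓ : ℤ) < t := by exact_mod_cast htl
              omega
            omega
          set j' : ℕ := (i + -(t : ℤ)).toNat with hj'
          have hj'eq : (j' : ℤ) = i + -(t : ℤ) := Int.toNat_of_nonneg h0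
          have hj'R : j' ≤ R := by
            have : (j' : ℤ) ≤ ((R : ℕ) : ℤ) := by omega
            exact_mod_cast this
          have step1 : zy (i + -(t : ℤ)) = zy (j' : ℤ) := by congr 1; omega
          rw [step1, hzy j', hagree j' hj'R]
          rw [hv1 _ hie]
          have : p j' = s (j' : ℤ) := (sPer_ray hn hpn j').symm
          rw [this]
          have hdiff : (j' : ℤ) - i = -(t : ℤ) := by omega
          exact sPer_congr hn hpn (by rw [hdiff]; exact dvd_neg.2 htdvd)
  -- the full chain up to KN + t stays aperiodic
  have hchain : ∀ c, c ≤ KN + t → oshift^[c] χ ∈ Aper1 (posRay Z) := by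
    intro c hc
    refine ⟨oshift_iter_posRay hZ hχmem c, ?_⟩
    apply aper_of_shift_aper hc
    rw [hχy]
    exact hy.2
  have happ := chainSC φ'.2.2 (KN + t) hchain
  have harg : (⟨oshift^[KN + t] χ, hchain (KN + t) le_rfl⟩ : ↥(Aper1 (posRay Z)))
      = ⟨y, hy⟩ := Subtype.ext hχy
  rw [harg] at happ
  have hNapp := hN ⟨χ, hchain 0 (Nat.zero_le _)⟩ (hχρ.mono (by omega))
  intro i hi
  rw [happ, oshift_iter, oshift_iter]
  exact hNapp (i + (KN + t)) (by omega)

end S9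

namespace S9

variable {A : Type*} [TopologicalSpace A] [DiscreteTopology A] {Z : Set (ℤ → A)}

/-- Density of the aperiodic part of `X = Z_ℕ`. -/
lemma Dmain (hZ : IsSubshift Z)
    (hsync : ∀ s ∈ Z, TPeriodic s → Synchronizing Z s)
    (h1 : ¬ HasIsolatedPeriodicPt (posRay Z)) :
    ∀ z ∈ posRay Z, ∀ t₀ : ℕ, ∃ y ∈ Aper1 (posRay Z), agree y z t₀ := by
  classical
  intro z hzX t₀
  by_cases hper : OPeriodic z
  swap
  · exact ⟨z, ⟨hzX, hper⟩, agree_refl _ _⟩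
  by_contra hcon
  push_neg at hcon
  obtain ⟨n, hn, hzn⟩ := hper
  have hsZ : sPer z n ∈ Z := sPer_mem hn hzn hZ hzX
  obtain ⟨ℓ, hglue⟩ := hsync (sPer z n) hsZ (sPer_TPer hn hzn)
  set s : ℤ → A := sPer z n with hs
  set t : ℕ := n * (ℓ / n + 1) with ht
  have htdm := Nat.div_add_mod ℓ n
  have htmod := Nat.mod_lt ℓ (show 0 < n by omega)
  have hteq : t = n * (ℓ / n) + n := by rw [ht]; ring
  have htl : ℓ < t := by omega
  have htu : t ≤ ℓ + n := by omega
  have htdvd : (n : ℤ) ∣ (t : ℤ) := ⟨((ℓ / n : ℕ) + 1 : ℕ), by push_cast [ht]; ring⟩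
  set t' : ℕ := t₀ + 2 * ℓ + 2 * n + 5 with ht'
  obtain ⟨x, hxX, hxne, hxag⟩ := nonisolated h1 hzX ⟨n, hn, hzn⟩ t'
  by_cases hxper : OPeriodic x
  swap
  · exact hcon x ⟨hxX, hxper⟩ (hxag.mono (by omega))
  obtain ⟨mₓ, hm1, hmx⟩ := hxper
  by_cases hsmall : mₓ + n ≤ t'
  · -- small period: x must equal z, contradiction
    apply hxne
    have h1' : ∀ i : ℕ, i < n → z (i + mₓ) = z i := by
      intro i hi
      have e1 : x (i + mₓ) = x i := per_add hmx i
      have e2 : x (i + mₓ) = z (i + mₓ) := hxag (i + mₓ) (by omega)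
      have e3 : x i = z i := hxag i (by omega)
      rw [← e2, e1, e3]
    have h2' : ∀ i : ℕ, z (i + mₓ) = z i := by
      intro i
      have hr : i % n < n := Nat.mod_lt i (by omega)
      have e1 : z (i + mₓ) = z (i % n + mₓ) := by
        conv_lhs => rw [← Nat.mod_add_div' i n]
        have harg : i % n + i / n * n + mₓ = (i % n + mₓ) + (i / n) * n := by ring
        rw [harg, per_add_mul hzn]
      rw [e1, h1' _ hr, per_mod hzn]
    funext i
    induction i using Nat.strong_induction_on with
    | _ i ih =>
      by_cases hit : i ≤ t'
      · exact hxag i hit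
      · have him : mₓ ≤ i := by omega
        have e1 : x i = x (i - mₓ) := by
          conv_lhs => rw [show i = (i - mₓ) + mₓ by omega]
          exact per_add hmx _
        have e2 : z (i - mₓ) = z i := by
          conv_rhs => rw [show i = (i - mₓ) + mₓ by omega]
          exact (h2' _).symm
        rw [e1, ih _ (by omega), e2]
  · -- big period
    push_neg at hsmall
    by_cases hdef : ∀ i : ℕ, i + ℓ < mₓ + t → x i = s ((i : ℤ) - mₓ)
    · -- no defect: x = z, contradiction
      apply hxne
      have hsi : ∀ i : ℕ, i ≤ n → s ((i : ℤ) - mₓ) = s (i : ℤ) := by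
        intro i hi
        have e1 : x i = s ((i : ℤ) - mₓ) := hdef i (by omega)
        have e2 : x i = z i := hxag i (by omega)
        have e3 : z i = s (i : ℤ) := (sPer_ray hn hzn i).symm
        rw [← e1, e2, e3]
      have hsinv : ∀ j : ℤ, s (j - mₓ) = s j := by
        intro j
        have hn' : (0 : ℤ) < n := by exact_mod_cast hn
        have hnn : (n : ℤ) ≠ 0 := by omega
        set i₂ : ℕ := (j % (n : ℤ)).toNat with hi₂
        have hi₂eq : ((i₂ : ℕ) : ℤ) = j % n := Int.toNat_of_nonneg (Int.emod_nonneg j hnn)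
        have hi₂lt : i₂ ≤ n := by
          have := Int.emod_lt_of_pos j hn'
          have : (i₂ : ℤ) < n := by omega
          exact_mod_cast this.le
        have hdvd1 : (n : ℤ) ∣ (j - i₂) := by
          rw [hi₂eq]
          exact Int.dvd_self_sub_of_emod_eq rfl
        have e1 : s (j - mₓ) = s ((i₂ : ℤ) - mₓ) :=
          sPer_congr hn hzn (by
            have : (j - (mₓ : ℤ)) - ((i₂ : ℤ) - mₓ) = j - i₂ := by ring
            rw [this]; exact hdvd1)
        have e2 : s ((i₂ : ℤ)) = s j := sPer_congr hn hzn (by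
          have : ((i₂ : ℤ)) - j = -(j - i₂) := by ring
          rw [this]; exact dvd_neg.2 hdvd1)
        rw [e1, hsi i₂ hi₂lt, e2]
      funext i
      induction i using Nat.strong_induction_on with
      | _ i ih =>
        by_cases him : i < mₓ
        · have e1 : x i = s ((i : ℤ) - mₓ) := hdef i (by omega)
          have e2 : s ((i : ℤ) - mₓ) = s (i : ℤ) := hsinv _
          rw [e1, e2]
          exact sPer_ray hn hzn i
        · push_neg at him
          have e1 : x i = x (i - mₓ) := by
            conv_lhs => rw [show i = (i - mₓ) + mₓ by omega]
            exact per_add hmx _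
          have e2 : z (i - mₓ) = s (((i - mₓ : ℕ)) : ℤ) := (sPer_ray hn hzn _).symm
          have e3 : s (((i - mₓ : ℕ)) : ℤ) = s ((i : ℤ) - mₓ) := by
            apply sPer_congr hn hzn
            have : (((i - mₓ : ℕ)) : ℤ) - ((i : ℤ) - mₓ) = 0 := by push_cast; omega
            rw [this]
            exact dvd_zero _
          have e4 : s ((i : ℤ) - mₓ) = s (i : ℤ) := hsinv _
          rw [e1, ih _ (by omega), e2, e3, e4]
          exact sPer_ray hn hzn i
    · -- a defect exists: build an aperiodic point close to z
      push_neg at hdef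
      obtain ⟨i₁, hi₁lt, hi₁ne⟩ := hdef
      have hsxZ : sPer x mₓ ∈ Z := sPer_mem hm1 hmx hZ hxX
      have hLZ : (fun i : ℤ => sPer x mₓ (i + ((mₓ : ℤ) + t))) ∈ Z := mem_shiftZ hZ hsxZ _
      have window_L : ∀ i : ℤ, -(ℓ : ℤ) ≤ i ∧ i ≤ (ℓ : ℤ) →
          (fun i : ℤ => sPer x mₓ (i + ((mₓ : ℤ) + t))) i = s i := by
        rintro i ⟨hi1, hi2⟩
        show sPer x mₓ (i + ((mₓ : ℤ) + t)) = s i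
        have h0 : (0 : ℤ) ≤ i + t := by
          have : (ℓ : ℤ) < t := by exact_mod_cast htl
          omega
        set j : ℕ := (i + (t : ℤ)).toNat with hj
        have hjeq : (j : ℤ) = i + t := Int.toNat_of_nonneg h0
        have e1 : sPer x mₓ (i + ((mₓ : ℤ) + t)) = x j := by
          apply sPer_eq hm1 hmx
          have : i + ((mₓ : ℤ) + t) - j = mₓ := by omega
          rw [this]
        have hjt' : j ≤ t' := by
          have h2' : (t : ℤ) ≤ (ℓ : ℤ) + n := by exact_mod_cast htu
          have : (j : ℤ) ≤ ((t' : ℕ) : ℤ) := by push_cast [ht']; omega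
          exact_mod_cast this
        rw [e1, hxag j hjt']
        have e3 : z j = s (j : ℤ) := (sPer_ray hn hzn j).symm
        rw [e3]
        apply sPer_congr hn hzn
        have : (j : ℤ) - i = t := by omega
        rw [this]
        exact htdvd
      have hG3 : (fun i : ℤ => if i < -(ℓ : ℤ) then (fun i : ℤ => sPer x mₓ (i + ((mₓ : ℤ) + t))) i
          else if i ≤ (ℓ : ℤ) then s i else s i) ∈ Z :=
        hglue _ hLZ s hsZ window_L (fun i _ => rfl)
      set Y : ℤ → A := fun i : ℤ =>
        (fun i : ℤ => if i < -(ℓ : ℤ) then (fun i : ℤ => sPer x mₓ (i + ((mₓ : ℤ) + t))) i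
          else if i ≤ (ℓ : ℤ) then s i else s i) (i + -((mₓ : ℤ) + t)) with hY
      have hYZ : Y ∈ Z := mem_shiftZ hZ hG3 _
      set y : ℕ → A := fun j : ℕ => Y (j : ℤ) with hy
      have hymem : y ∈ posRay Z := ray_mem_posRay hYZ
      have hy_low : ∀ i : ℤ, i + ℓ < (mₓ : ℤ) + t → Y i = sPer x mₓ i := by
        intro i hi
        rw [hY]
        simp only
        rw [if_pos (by omega)]
        congr 1
        ring
      have hy_high : ∀ i : ℤ, (mₓ : ℤ) + t - ℓ ≤ i → Y i = s (i - ((mₓ : ℤ) + t)) := by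
        intro i hi
        rw [hY]
        simp only
        rw [if_neg (by omega)]
        split <;> rfl
      have hagy : agree y z t₀ := by
        intro j hj
        have hjlt : (j : ℤ) + ℓ < (mₓ : ℤ) + t := by
          have hms : ((t' : ℕ) : ℤ) < (mₓ : ℤ) + n := by exact_mod_cast hsmall
          have hms2 : (ℓ : ℤ) < t := by exact_mod_cast htl
          push_cast [ht'] at hms ⊢
          omega
        show Y (j : ℤ) = z j
        rw [hy_low _ hjlt]
        rw [sPer_ray hm1 hmx j]
        exact hxag j (by omega)
      have hyaper : ¬ OPeriodic y := by
        refine aper_gen hn hzn (B := mₓ + t) (δ := mₓ + t) ?_ (D := i₁) ?_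
        · intro i hi
          show Y (i : ℤ) = sPer z n ((i : ℤ) - ((mₓ + t : ℕ) : ℤ))
          rw [hy_high _ (by push_cast; omega)]
          have harg : (i : ℤ) - ((mₓ : ℤ) + t) = (i : ℤ) - ((mₓ + t : ℕ) : ℤ) := by
            push_cast
            ring
          rw [harg]
        · show Y (i₁ : ℤ) ≠ sPer z n ((i₁ : ℤ) - ((mₓ + t : ℕ) : ℤ))
          have e1 : Y (i₁ : ℤ) = sPer x mₓ (i₁ : ℤ) := hy_low _ (by push_cast; omega)
          have e2 : sPer x mₓ (i₁ : ℤ) = x i₁ := sPer_ray hm1 hmx i₁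
          have e3 : sPer z n ((i₁ : ℤ) - ((mₓ + t : ℕ) : ℤ)) = s ((i₁ : ℤ) - mₓ) := by
            apply sPer_congr hn hzn
            have : ((i₁ : ℤ) - ((mₓ + t : ℕ) : ℤ)) - ((i₁ : ℤ) - mₓ) = -(t : ℤ) := by
              push_cast
              ring
            rw [this]
            exact dvd_neg.2 htdvd
          rw [e1, e2, e3]
          exact hi₁ne
      exact hcon y ⟨hymem, hyaper⟩ hagy

end S9

namespace S9

variable {A : Type*} [TopologicalSpace A] [DiscreteTopology A] {Z : Set (ℤ → A)}

/-- Prepending a long block of a periodic pattern `Q` to a point `u₀` close to `Q`. -/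
lemma prependW (hZ : IsSubshift Z) {Q : ℕ → A} (hQX : Q ∈ posRay Z) {r : ℕ} (hr : 1 ≤ r)
    (hQr : oshift^[r] Q = Q) {ℓ : ℕ}
    (hglue : ∀ x ∈ Z, ∀ y ∈ Z,
      (∀ i : ℤ, -(ℓ : ℤ) ≤ i ∧ i ≤ (ℓ : ℤ) → x i = sPer Q r i) →
      (∀ i : ℤ, -(ℓ : ℤ) ≤ i ∧ i ≤ (ℓ : ℤ) → y i = sPer Q r i) →
      (fun i : ℤ => if i < -(ℓ : ℤ) then x i else if i ≤ (ℓ : ℤ) then sPer Q r i else y i) ∈ Z)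
    {u₀ : ℕ → A} (hu₀X : u₀ ∈ posRay Z) (hag : agree u₀ Q (2 * ℓ + 2 * r)) (J : ℕ) :
    ∃ u, u ∈ posRay Z ∧ oshift^[J * r] u = u₀ ∧ agree u Q (J * r + 2 * ℓ + 2 * r) := by
  classical
  set t : ℕ := r * (ℓ / r + 1) with ht
  have htdm := Nat.div_add_mod ℓ r
  have htmod := Nat.mod_lt ℓ (show 0 < r by omega)
  have hteq : t = r * (ℓ / r) + r := by rw [ht]; ring
  have htl : ℓ < t := by omega
  have htu : t ≤ ℓ + r := by omega
  have htdvd : (r : ℤ) ∣ (t : ℤ) := ⟨((ℓ / r : ℕ) + 1 : ℕ), by push_cast [ht]; ring⟩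
  obtain ⟨zu, hzuZ, hzu⟩ := posRay_lift hu₀X
  have hu'Z : (fun i : ℤ => zu (i + (t : ℤ))) ∈ Z := mem_shiftZ hZ hzuZ _
  have window_u' : ∀ i : ℤ, -(ℓ : ℤ) ≤ i ∧ i ≤ (ℓ : ℤ) →
      (fun i : ℤ => zu (i + (t : ℤ))) i = sPer Q r i := by
    rintro i ⟨hi1, hi2⟩
    have h0 : (0 : ℤ) ≤ i + t := by
      have : (ℓ : ℤ) < t := by exact_mod_cast htl
      omega
    set j : ℕ := (i + (t : ℤ)).toNat with hj
    have hjeq : (j : ℤ) = i + t := Int.toNat_of_nonneg h0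
    have hjK : j ≤ 2 * ℓ + 2 * r := by
      have h2' : (t : ℤ) ≤ (ℓ : ℤ) + r := by exact_mod_cast htu
      have : (j : ℤ) ≤ ((2 * ℓ + 2 * r : ℕ) : ℤ) := by push_cast; omega
      exact_mod_cast this
    show zu (i + (t : ℤ)) = sPer Q r i
    have step1 : zu (i + (t : ℤ)) = zu (j : ℤ) := by congr 1; omega
    rw [step1, hzu j, hag j hjK]
    have e1 : Q j = sPer Q r (j : ℤ) := (sPer_ray hr hQr j).symm
    rw [e1]
    apply sPer_congr hr hQr
    have : (j : ℤ) - i = t := by omega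
    rw [this]
    exact htdvd
  have hsQZ : sPer Q r ∈ Z := sPer_mem hr hQr hZ hQX
  have hG : (fun i : ℤ => if i < -(ℓ : ℤ) then sPer Q r i
      else if i ≤ (ℓ : ℤ) then sPer Q r i else (fun i : ℤ => zu (i + (t : ℤ))) i) ∈ Z :=
    hglue _ hsQZ _ hu'Z (fun i _ => rfl) window_u'
  set w : ℤ → A := fun i : ℤ =>
    (fun i : ℤ => if i < -(ℓ : ℤ) then sPer Q r i
      else if i ≤ (ℓ : ℤ) then sPer Q r i else (fun i : ℤ => zu (i + (t : ℤ))) i) (i + -(t : ℤ)) with hw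
  have hwZ : w ∈ Z := mem_shiftZ hZ hG _
  have hw_low : ∀ i : ℤ, i ≤ (t : ℤ) + ℓ → w i = sPer Q r i := by
    intro i hi
    rw [hw]
    simp only
    by_cases h1 : i + -(t : ℤ) < -(ℓ : ℤ)
    · rw [if_pos h1]
      exact sPer_congr hr hQr (by
        have : (i + -(t : ℤ)) - i = -(t : ℤ) := by ring
        rw [this]; exact dvd_neg.2 htdvd)
    · rw [if_neg h1, if_pos (by omega)]
      exact sPer_congr hr hQr (by
        have : (i + -(t : ℤ)) - i = -(t : ℤ) := by ring
        rw [this]; exact dvd_neg.2 htdvd)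
  have hw_high : ∀ i : ℤ, (t : ℤ) + ℓ < i → w i = zu i := by
    intro i hi
    rw [hw]
    simp only
    rw [if_neg (by omega), if_neg (by omega)]
    congr 1
    ring
  have hw_ray : ∀ j : ℕ, w (j : ℤ) = u₀ j := by
    intro j
    by_cases hk : (j : ℤ) ≤ (t : ℤ) + ℓ
    · rw [hw_low _ hk]
      have hjK : j ≤ 2 * ℓ + 2 * r := by
        have h2' : (t : ℤ) ≤ (ℓ : ℤ) + r := by exact_mod_cast htu
        have : (j : ℤ) ≤ ((2 * ℓ + 2 * r : ℕ) : ℤ) := by push_cast; omega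
        exact_mod_cast this
      rw [sPer_ray hr hQr j]
      exact (hag j hjK).symm
    · rw [hw_high _ (by omega), hzu j]
  -- the prepended point
  set u : ℕ → A := fun j : ℕ => w ((j : ℤ) + -((J * r : ℕ) : ℤ)) with hu
  have humem : u ∈ posRay Z := ray_mem_posRay (mem_shiftZ hZ hwZ _)
  refine ⟨u, humem, ?_, ?_⟩
  · funext i
    rw [oshift_iter]
    show w ((((i + J * r) : ℕ) : ℤ) + -((J * r : ℕ) : ℤ)) = u₀ i
    have harg : (((i + J * r) : ℕ) : ℤ) + -((J * r : ℕ) : ℤ) = (i : ℤ) := by push_cast; ring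
    rw [harg, hw_ray i]
  · intro i hi
    show w ((i : ℤ) + -((J * r : ℕ) : ℤ)) = Q i
    by_cases hk : (i : ℤ) + -((J * r : ℕ) : ℤ) ≤ (t : ℤ) + ℓ
    · rw [hw_low _ hk]
      exact sPer_eq hr hQr ⟨-(J : ℤ), by push_cast; ring⟩
    · push_neg at hk
      have hiJ : J * r ≤ i := by
        have hJge : (0:ℤ) ≤ (t : ℤ) + ℓ := by positivity
        have : ((J * r : ℕ) : ℤ) ≤ (i : ℤ) := by omega
        exact_mod_cast this
      have h0 : (0 : ℤ) ≤ (i : ℤ) + -((J * r : ℕ) : ℤ) := by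
        have : ((J * r : ℕ) : ℤ) ≤ (i : ℤ) := by exact_mod_cast hiJ
        omega
      rw [hw_high _ hk]
      set j : ℕ := ((i : ℤ) + -((J * r : ℕ) : ℤ)).toNat with hj
      have hjeq : (j : ℤ) = (i : ℤ) - (J * r : ℕ) := by
        rw [hj]
        rw [Int.toNat_of_nonneg h0]
        ring
      have step1 : zu ((i : ℤ) + -((J * r : ℕ) : ℤ)) = zu (j : ℤ) := by congr 1; omega
      have hjK : j ≤ J * r + 2 * ℓ + 2 * r := by
        have : (j : ℤ) ≤ ((J * r + 2 * ℓ + 2 * r : ℕ) : ℤ) := by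
          have : (i : ℤ) ≤ ((J * r + 2 * ℓ + 2 * r : ℕ) : ℤ) := by exact_mod_cast hi
          push_cast at this ⊢
          omega
        exact_mod_cast this
      have hjK2 : j ≤ 2 * ℓ + 2 * r := by omega
      rw [step1, hzu j, hag j hjK2]
      have : i = j + J * r := by omega
      rw [this, per_add_mul hQr]

/-- Approximation by a point which is aperiodic and stays aperiodic after one shift. -/
lemma D2main (hZ : IsSubshift Z)
    (hsync : ∀ s ∈ Z, TPeriodic s → Synchronizing Z s)
    (h1 : ¬ HasIsolatedPeriodicPt (posRay Z)) :
    ∀ z ∈ posRay Z, ∀ t₀ : ℕ, ∃ y, y ∈ Aper1 (posRay Z) ∧ oshift y ∈ Aper1 (posRay Z) ∧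
      agree y z t₀ := by
  classical
  intro z hzX t₀
  by_cases hzper : OPeriodic z
  · -- z periodic : prepend a long block of z to a nearby aperiodic point
    obtain ⟨r, hr, hzr⟩ := hzper
    have hsQZ : sPer z r ∈ Z := sPer_mem hr hzr hZ hzX
    obtain ⟨ℓ, hglue⟩ := hsync (sPer z r) hsQZ (sPer_TPer hr hzr)
    obtain ⟨u₀, hu₀A, hu₀ag⟩ := Dmain hZ hsync h1 z hzX (2 * ℓ + 2 * r)
    obtain ⟨u, huX, hush, huag⟩ := prependW hZ hzX hr hzr hglue hu₀A.1 hu₀ag (t₀ + 2)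
    have hJr : 2 ≤ (t₀ + 2) * r := by
      calc 2 ≤ t₀ + 2 := by omega
        _ = (t₀ + 2) * 1 := by ring
        _ ≤ (t₀ + 2) * r := Nat.mul_le_mul_left _ hr
    have haper : ∀ c, c ≤ (t₀ + 2) * r → ¬ OPeriodic (oshift^[c] u) := by
      intro c hc
      apply aper_of_shift_aper hc
      rw [hush]
      exact hu₀A.2
    refine ⟨u, ⟨huX, by simpa using haper 0 (Nat.zero_le _)⟩,
      ⟨oshift_posRay hZ huX, ?_⟩, huag.mono (by nlinarith)⟩
    have := haper 1 (by omega)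
    simpa using this
  by_cases hzsper : OPeriodic (oshift z)
  swap
  · exact ⟨z, ⟨hzX, hzper⟩, ⟨oshift_posRay hZ hzX, hzsper⟩, agree_refl _ _⟩
  -- z aperiodic but σ z periodic : glue z's head to a robust point near Q := σ z
  obtain ⟨r, hr, hQr⟩ := hzsper
  have hQX : oshift z ∈ posRay Z := oshift_posRay hZ hzX
  set Q : ℕ → A := oshift z with hQ
  have hsQZ : sPer Q r ∈ Z := sPer_mem hr hQr hZ hQX
  obtain ⟨ℓ, hglue⟩ := hsync (sPer Q r) hsQZ (sPer_TPer hr hQr)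
  obtain ⟨u₀, hu₀A, hu₀ag⟩ := Dmain hZ hsync h1 Q hQX (2 * ℓ + 2 * r)
  set b : ℕ := r * (ℓ / r + 1) with hb
  have hbdm := Nat.div_add_mod ℓ r
  have hbmod := Nat.mod_lt ℓ (show 0 < r by omega)
  have hbeq : b = r * (ℓ / r) + r := by rw [hb]; ring
  have hbl : ℓ < b := by omega
  have hbu : b ≤ ℓ + r := by omega
  have hbdvd : (r : ℤ) ∣ (b : ℤ) := ⟨((ℓ / r : ℕ) + 1 : ℕ), by push_cast [hb]; ring⟩
  set J : ℕ := b + ℓ + t₀ + 5 with hJ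
  have hJr : b + ℓ + 1 ≤ J * r := by
    calc b + ℓ + 1 ≤ J := by omega
      _ = J * 1 := by ring
      _ ≤ J * r := Nat.mul_le_mul_left _ hr
  obtain ⟨u, huX, hush, huag⟩ := prependW hZ hQX hr hQr hglue hu₀A.1 hu₀ag J
  set M : ℕ := J * r with hM
  set a : ℕ := r * ((t₀ + ℓ) / r + 1) with ha
  have hadm := Nat.div_add_mod (t₀ + ℓ) r
  have hamod := Nat.mod_lt (t₀ + ℓ) (show 0 < r by omega)
  have haeq : a = r * ((t₀ + ℓ) / r) + r := by rw [ha]; ring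
  have hal : t₀ + ℓ < a := by omega
  have hadvd : (r : ℤ) ∣ (a : ℤ) := ⟨(((t₀ + ℓ) / r : ℕ) + 1 : ℕ), by push_cast [ha]; ring⟩
  obtain ⟨zz, hzzZ, hzz⟩ := posRay_lift hzX
  obtain ⟨zu, hzuZ, hzu⟩ := posRay_lift huX
  -- LEFT part : z shifted left by 1 + a
  have hLZ : (fun i : ℤ => zz (i + ((1 + a : ℕ) : ℤ))) ∈ Z := mem_shiftZ hZ hzzZ _
  have window_L : ∀ i : ℤ, -(ℓ : ℤ) ≤ i ∧ i ≤ (ℓ : ℤ) →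
      (fun i : ℤ => zz (i + ((1 + a : ℕ) : ℤ))) i = sPer Q r i := by
    rintro i ⟨hi1, hi2⟩
    have h0 : (0 : ℤ) ≤ i + a := by
      have : (t₀ : ℤ) + ℓ < a := by exact_mod_cast hal
      push_cast at this
      omega
    set k : ℕ := (i + (a : ℤ)).toNat with hk
    have hkeq : (k : ℤ) = i + a := Int.toNat_of_nonneg h0
    have step1 : zz (i + ((1 + a : ℕ) : ℤ)) = zz (((1 + k : ℕ) : ℤ)) := by
      congr 1
      push_cast
      omega
    show zz (i + ((1 + a : ℕ) : ℤ)) = sPer Q r i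
    rw [step1, hzz (1 + k)]
    have e1 : z (1 + k) = Q k := by rw [hQ]; show z (1 + k) = z (k + 1); congr 1; omega
    rw [e1]
    have e2 : Q k = sPer Q r (k : ℤ) := (sPer_ray hr hQr k).symm
    rw [e2]
    apply sPer_congr hr hQr
    have : (k : ℤ) - i = a := by omega
    rw [this]
    exact hadvd
  -- RIGHT part : u shifted left by b
  have hRZ : (fun i : ℤ => zu (i + (b : ℤ))) ∈ Z := mem_shiftZ hZ hzuZ _
  have window_R : ∀ i : ℤ, -(ℓ : ℤ) ≤ i ∧ i ≤ (ℓ : ℤ) →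
      (fun i : ℤ => zu (i + (b : ℤ))) i = sPer Q r i := by
    rintro i ⟨hi1, hi2⟩
    have h0 : (0 : ℤ) ≤ i + b := by
      have : (ℓ : ℤ) < b := by exact_mod_cast hbl
      omega
    set k : ℕ := (i + (b : ℤ)).toNat with hk
    have hkeq : (k : ℤ) = i + b := Int.toNat_of_nonneg h0
    have hkK : k ≤ M + 2 * ℓ + 2 * r := by
      have : (k : ℤ) ≤ ((M + 2 * ℓ + 2 * r : ℕ) : ℤ) := by
        have h2' : (b : ℤ) ≤ (ℓ : ℤ) + r := by exact_mod_cast hbu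
        have h3 : ((b + ℓ + 1 : ℕ) : ℤ) ≤ ((M : ℕ) : ℤ) := by exact_mod_cast hJr
        push_cast at h3 ⊢
        omega
      exact_mod_cast this
    show zu (i + (b : ℤ)) = sPer Q r i
    have step1 : zu (i + (b : ℤ)) = zu (k : ℤ) := by congr 1; omega
    rw [step1, hzu k, huag k hkK]
    have e2 : Q k = sPer Q r (k : ℤ) := (sPer_ray hr hQr k).symm
    rw [e2]
    apply sPer_congr hr hQr
    have : (k : ℤ) - i = b := by omega
    rw [this]
    exact hbdvd
  have hG : (fun i : ℤ => if i < -(ℓ : ℤ) then (fun i : ℤ => zz (i + ((1 + a : ℕ) : ℤ))) i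
      else if i ≤ (ℓ : ℤ) then sPer Q r i else (fun i : ℤ => zu (i + (b : ℤ))) i) ∈ Z :=
    hglue _ hLZ _ hRZ window_L window_R
  set Y : ℤ → A := fun i : ℤ =>
    (fun i : ℤ => if i < -(ℓ : ℤ) then (fun i : ℤ => zz (i + ((1 + a : ℕ) : ℤ))) i
      else if i ≤ (ℓ : ℤ) then sPer Q r i else (fun i : ℤ => zu (i + (b : ℤ))) i)
      (i + -((1 + a : ℕ) : ℤ)) with hY
  have hYZ : Y ∈ Z := mem_shiftZ hZ hG _
  set y : ℕ → A := fun j : ℕ => Y (j : ℤ) with hy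
  have hymem : y ∈ posRay Z := ray_mem_posRay hYZ
  set C : ℕ := 1 + a + M - b with hC
  have hCb : b ≤ M := by omega
  have hCeq : (C : ℤ) = 1 + (a : ℤ) + ((M : ℕ) : ℤ) - (b : ℤ) := by omega
  have hysh : oshift^[C] y = u₀ := by
    rw [← hush]
    funext i
    rw [oshift_iter, oshift_iter]
    show Y (((i + C : ℕ)) : ℤ) = u ((i + M : ℕ))
    have harg : (((i + C : ℕ)) : ℤ) + -((1 + a : ℕ) : ℤ) = (i : ℤ) + ((M : ℕ) : ℤ) - (b : ℤ) := by
      omega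
    rw [hY]
    simp only
    rw [harg]
    have hbr : (ℓ : ℤ) < (i : ℤ) + ((M : ℕ) : ℤ) - (b : ℤ) := by omega
    rw [if_neg (by omega), if_neg (by omega)]
    have harg2 : (i : ℤ) + ((M : ℕ) : ℤ) - (b : ℤ) + b = ((i + M : ℕ) : ℤ) := by push_cast; ring
    rw [harg2, hzu]
  have haper : ∀ c, c ≤ C → ¬ OPeriodic (oshift^[c] y) := by
    intro c hc
    apply aper_of_shift_aper hc
    rw [hysh]
    exact hu₀A.2
  have hagy : agree y z t₀ := by
    intro j hj
    show Y (j : ℤ) = z j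
    rw [hY]
    simp only
    have hbr : (j : ℤ) + -((1 + a : ℕ) : ℤ) < -(ℓ : ℤ) := by
      have : ((t₀ + ℓ : ℕ) : ℤ) < a := by exact_mod_cast hal
      push_cast at this ⊢
      omega
    rw [if_pos hbr]
    have harg : (j : ℤ) + -((1 + a : ℕ) : ℤ) + ((1 + a : ℕ) : ℤ) = (j : ℤ) := by ring
    rw [harg, hzz j]
  have hC1 : 1 ≤ C := by omega
  exact ⟨y, ⟨hymem, by simpa using haper 0 (Nat.zero_le _)⟩,
    ⟨oshift_posRay hZ hymem, by simpa using haper 1 hC1⟩, hagy⟩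

end S9

namespace S9

variable {A : Type*} [TopologicalSpace A] [DiscreteTopology A] {Z : Set (ℤ → A)}

lemma exists_extension (hZ : IsSubshift Z)
    (hsync : ∀ s ∈ Z, TPeriodic s → Synchronizing Z s)
    (h1 : ¬ HasIsolatedPeriodicPt (posRay Z)) (h2 : ¬ HasIsolatedPeriodicPt (negRay Z))
    (φ' : {f : ↥(Aper1 (posRay Z)) → ↥(Aper1 (posRay Z)) // Continuous f ∧ ShiftCommuting1 f}) :
    ∃ Φ : ↥(posRay Z) → ↥(posRay Z),
      Continuous Φ ∧ ShiftCommuting1 Φ ∧ RestrictsTo1 Φ φ'.1 := by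
  classical
  have hE : ∀ p : ℕ → A, p ∈ posRay Z → OPeriodic p →
      ∃ V, V ∈ posRay Z ∧ ∀ m : ℕ, ∃ R : ℕ, ∀ y (hy : y ∈ Aper1 (posRay Z)), agree y p R →
        agree ((φ'.1 ⟨y, hy⟩ : ℕ → A)) V m := by
    intro p hp hper
    obtain ⟨V, hV1, hV2⟩ := Emain hZ hsync h2 φ' hp hper
    exact ⟨V, hV1, hV2⟩
  choose V hVmem hVspec using hE
  set Φ : ↥(posRay Z) → ↥(posRay Z) := fun z =>
    if h : OPeriodic (z : ℕ → A) then ⟨V z.1 z.2 h, hVmem z.1 z.2 h⟩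
    else ⟨(φ'.1 ⟨z.1, z.2, h⟩ : ℕ → A), (φ'.1 ⟨z.1, z.2, h⟩).2.1⟩ with hΦ
  have hVal_per : ∀ (z : ↥(posRay Z)) (h : OPeriodic (z : ℕ → A)),
      (Φ z : ℕ → A) = V z.1 z.2 h := by
    intro z h
    rw [hΦ]
    simp only [dif_pos h]
  have hVal_aper : ∀ (z : ↥(posRay Z)) (h : ¬ OPeriodic (z : ℕ → A)),
      (Φ z : ℕ → A) = (φ'.1 ⟨z.1, z.2, h⟩ : ℕ → A) := by
    intro z h
    rw [hΦ]
    simp only [dif_neg h]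
  have hres : RestrictsTo1 Φ φ'.1 := by
    intro x hx
    exact hVal_aper ⟨x, hx.1⟩ hx.2
  have CONT : ∀ w : ↥(posRay Z), ∀ m : ℕ, ∃ R, ∀ w' : ↥(posRay Z),
      agree (w' : ℕ → A) (w : ℕ → A) R → agree (Φ w' : ℕ → A) (Φ w : ℕ → A) m := by
    intro w m
    by_cases h : OPeriodic (w : ℕ → A)
    · obtain ⟨R₁, hR₁⟩ := hVspec w.1 w.2 h m
      refine ⟨R₁, fun w' hag => ?_⟩
      rw [hVal_per w h]
      by_cases h' : OPeriodic (w' : ℕ → A)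
      · rw [hVal_per w' h']
        obtain ⟨R₂, hR₂⟩ := hVspec w'.1 w'.2 h' m
        obtain ⟨y, hyA, hyag⟩ := Dmain hZ hsync h1 w'.1 w'.2 (max R₁ R₂)
        have e2 : agree (φ'.1 ⟨y, hyA⟩ : ℕ → A) (V w'.1 w'.2 h') m :=
          hR₂ y hyA (hyag.mono (le_max_right _ _))
        have hyw : agree y (w : ℕ → A) R₁ := (hyag.mono (le_max_left _ _)).trans hag
        have e1 : agree (φ'.1 ⟨y, hyA⟩ : ℕ → A) (V w.1 w.2 h) m := hR₁ y hyA hyw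
        exact e2.symm.trans e1
      · rw [hVal_aper w' h']
        exact hR₁ w'.1 ⟨w'.2, h'⟩ hag
    · obtain ⟨N, hN⟩ := cont_modulus φ'.2.1 ⟨w.1, w.2, h⟩ m
      refine ⟨N, fun w' hag => ?_⟩
      rw [hVal_aper w h]
      by_cases h' : OPeriodic (w' : ℕ → A)
      · rw [hVal_per w' h']
        obtain ⟨R₂, hR₂⟩ := hVspec w'.1 w'.2 h' m
        obtain ⟨y, hyA, hyag⟩ := Dmain hZ hsync h1 w'.1 w'.2 (max N R₂)
        have e2 : agree (φ'.1 ⟨y, hyA⟩ : ℕ → A) (V w'.1 w'.2 h') m :=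
          hR₂ y hyA (hyag.mono (le_max_right _ _))
        have hyw : agree y (w : ℕ → A) N := (hyag.mono (le_max_left _ _)).trans hag
        have e1 : agree (φ'.1 ⟨y, hyA⟩ : ℕ → A) (φ'.1 ⟨w.1, w.2, h⟩ : ℕ → A) m :=
          hN ⟨y, hyA⟩ hyw
        exact e2.symm.trans e1
      · rw [hVal_aper w' h']
        exact hN ⟨w'.1, ⟨w'.2, h'⟩⟩ hag
  have hcont : Continuous Φ := continuous_of_modulus CONT
  have hsc : ShiftCommuting1 Φ := by
    intro z hz
    funext i
    obtain ⟨Ra, hRa⟩ := CONT z (i + 1)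
    obtain ⟨Rb, hRb⟩ := CONT ⟨oshift (z : ℕ → A), hz⟩ i
    obtain ⟨y, hyA, hyσA, hyag⟩ := D2main hZ hsync h1 z.1 z.2 (max Ra Rb + 1)
    have A1 : (Φ ⟨y, hyA.1⟩ : ℕ → A) = (φ'.1 ⟨y, hyA⟩ : ℕ → A) := hres y hyA
    have A2 : (Φ ⟨oshift y, hyσA.1⟩ : ℕ → A) = (φ'.1 ⟨oshift y, hyσA⟩ : ℕ → A) :=
      hres (oshift y) hyσA
    have A3 : (φ'.1 ⟨oshift y, hyσA⟩ : ℕ → A) = oshift (φ'.1 ⟨y, hyA⟩ : ℕ → A) :=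
      φ'.2.2 ⟨y, hyA⟩ hyσA
    have B1 : agree (Φ ⟨oshift y, hyσA.1⟩ : ℕ → A) (Φ ⟨oshift (z : ℕ → A), hz⟩ : ℕ → A) i := by
      apply hRb
      intro j hj
      show y (j + 1) = (z : ℕ → A) (j + 1)
      exact hyag (j + 1) (by omega)
    have B2 : agree (Φ ⟨y, hyA.1⟩ : ℕ → A) (Φ z : ℕ → A) (i + 1) := by
      apply hRa
      exact hyag.mono (by omega)
    calc (Φ ⟨oshift (z : ℕ → A), hz⟩ : ℕ → A) i
        = (Φ ⟨oshift y, hyσA.1⟩ : ℕ → A) i := (B1 i le_rfl).symm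
      _ = (φ'.1 ⟨oshift y, hyσA⟩ : ℕ → A) i := by rw [A2]
      _ = (φ'.1 ⟨y, hyA⟩ : ℕ → A) (i + 1) := by rw [A3]; rfl
      _ = (Φ ⟨y, hyA.1⟩ : ℕ → A) (i + 1) := by rw [A1]
      _ = (Φ z : ℕ → A) (i + 1) := B2 (i + 1) le_rfl
      _ = oshift (Φ z : ℕ → A) i := rfl
  exact ⟨Φ, hcont, hsc, hres⟩

lemma uniq_ext (hZ : IsSubshift Z)
    (hsync : ∀ s ∈ Z, TPeriodic s → Synchronizing Z s)
    (h1 : ¬ HasIsolatedPeriodicPt (posRay Z))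
    (φ' : {f : ↥(Aper1 (posRay Z)) → ↥(Aper1 (posRay Z)) // Continuous f ∧ ShiftCommuting1 f})
    (ψ₁ ψ₂ : ↥(posRay Z) → ↥(posRay Z))
    (hc1 : Continuous ψ₁) (hr1 : RestrictsTo1 ψ₁ φ'.1)
    (hc2 : Continuous ψ₂) (hr2 : RestrictsTo1 ψ₂ φ'.1) : ψ₁ = ψ₂ := by
  funext w
  apply Subtype.ext
  funext i
  obtain ⟨N₁, hN₁⟩ := cont_modulus hc1 w i
  obtain ⟨N₂, hN₂⟩ := cont_modulus hc2 w i
  obtain ⟨y, hyA, hyag⟩ := Dmain hZ hsync h1 w.1 w.2 (max N₁ N₂)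
  have e1 := hN₁ ⟨y, hyA.1⟩ (hyag.mono (le_max_left _ _))
  have e2 := hN₂ ⟨y, hyA.1⟩ (hyag.mono (le_max_right _ _))
  have e3 : (ψ₁ ⟨y, hyA.1⟩ : ℕ → A) = (ψ₂ ⟨y, hyA.1⟩ : ℕ → A) := by
    rw [hr1 y hyA, hr2 y hyA]
  exact (e1 i le_rfl).symm.trans ((congrFun e3 i).trans (e2 i le_rfl))

lemma sc_comp {X : Set (ℕ → A)} {f g : ↥X → ↥X}
    (hf : ShiftCommuting1 f) (hg : ShiftCommuting1 g) : ShiftCommuting1 (f ∘ g) := by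
  intro x hx
  have h1 := hg x hx
  have hmem : oshift ((g x : ℕ → A)) ∈ X := h1 ▸ (g ⟨oshift (x : ℕ → A), hx⟩).2
  have e1 : g ⟨oshift (x : ℕ → A), hx⟩ = ⟨oshift (g x : ℕ → A), hmem⟩ := Subtype.ext h1
  show (f (g ⟨oshift (x : ℕ → A), hx⟩) : ℕ → A) = oshift (f (g x) : ℕ → A)
  rw [e1]
  exact hf (g x) hmem

end S9

/-- With `X = Z_ℕ` as in the previous statement, every continuous
shift-commuting self-map of `X'` extends uniquely to a continuous shift-commuting
self-map of `X`, and the extension map is an injective monoid homomorphism (it is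
injective, preserves the identity, and preserves composition) from the monoid of
continuous shift-commuting self-maps of `X'` into `End(X)`. -/
theorem statement9 {A : Type*} [Fintype A] [TopologicalSpace A] [DiscreteTopology A]
    (Z : Set (ℤ → A)) (hZ : IsSubshift Z)
    (hsync : ∀ s ∈ Z, TPeriodic s → Synchronizing Z s)
    (h1 : ¬ HasIsolatedPeriodicPt (posRay Z)) (h2 : ¬ HasIsolatedPeriodicPt (negRay Z))
    (X : Set (ℕ → A)) (hX : X = posRay Z) :
    (∀ φ' : {f : Aper1 X → Aper1 X // Continuous f ∧ ShiftCommuting1 f},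
      ∃! φ : X → X, Continuous φ ∧ ShiftCommuting1 φ ∧ RestrictsTo1 φ φ'.1) ∧
    ∃ ext : {f : Aper1 X → Aper1 X // Continuous f ∧ ShiftCommuting1 f} →
        {g : X → X // Continuous g ∧ ShiftCommuting1 g},
      (∀ φ', RestrictsTo1 (ext φ').1 φ'.1) ∧
      Function.Injective ext ∧
      (∀ φ' : {f : Aper1 X → Aper1 X // Continuous f ∧ ShiftCommuting1 f},
        (∀ x : Aper1 X, φ'.1 x = x) → ∀ y : X, (ext φ').1 y = y) ∧
      (∀ φ' ψ' χ' : {f : Aper1 X → Aper1 X // Continuous f ∧ ShiftCommuting1 f},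
        (∀ x : Aper1 X, χ'.1 x = φ'.1 (ψ'.1 x)) →
        ∀ y : X, (ext χ').1 y = (ext φ').1 ((ext ψ').1 y)) := by
  classical
  subst hX
  constructor
  · intro φ'
    obtain ⟨Φ, hcont, hsc, hres⟩ := S9.exists_extension hZ hsync h1 h2 φ'
    refine ⟨Φ, ⟨hcont, hsc, hres⟩, ?_⟩
    rintro ψ ⟨hc2, -, hr2⟩
    exact S9.uniq_ext hZ hsync h1 φ' ψ Φ hc2 hr2 hcont hres
  · choose F hFcont hFsc hFres using fun φ' => S9.exists_extension hZ hsync h1 h2 φ'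
    refine ⟨fun φ' => ⟨F φ', hFcont φ', hFsc φ'⟩, fun φ' => hFres φ', ?_, ?_, ?_⟩
    · -- injectivity
      intro φ' ψ' hEq
      have hv : F φ' = F ψ' := congrArg Subtype.val hEq
      apply Subtype.ext
      funext x
      rcases x with ⟨xv, hxv⟩
      apply Subtype.ext
      have e1 := hFres φ' xv hxv
      have e2 := hFres ψ' xv hxv
      rw [← e1, ← e2, hv]
    · -- identity
      intro φ' hid y
      have hrid : RestrictsTo1 (id : ↥(posRay Z) → ↥(posRay Z)) φ'.1 := by
        intro x hx
        show x = (φ'.1 ⟨x, hx⟩ : ℕ → A)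
        rw [hid ⟨x, hx⟩]
      have heq : F φ' = id :=
        S9.uniq_ext hZ hsync h1 φ' (F φ') id (hFcont φ') (hFres φ') continuous_id hrid
      show F φ' y = y
      rw [heq]
      rfl
    · -- composition
      intro φ' ψ' χ' hcomp y
      have hgc : Continuous ((F φ') ∘ (F ψ')) := (hFcont φ').comp (hFcont ψ')
      have hgsc : ShiftCommuting1 ((F φ') ∘ (F ψ')) := S9.sc_comp (hFsc φ') (hFsc ψ')
      have hgres : RestrictsTo1 ((F φ') ∘ (F ψ')) χ'.1 := by
        intro x hx
        show (F φ' (F ψ' ⟨x, hx.1⟩) : ℕ → A) = (χ'.1 ⟨x, hx⟩ : ℕ → A)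
        have e1 := hFres ψ' x hx
        have hmem : (ψ'.1 ⟨x, hx⟩ : ℕ → A) ∈ Aper1 (posRay Z) := (ψ'.1 ⟨x, hx⟩).2
        have e2 : F ψ' ⟨x, hx.1⟩ = ⟨(ψ'.1 ⟨x, hx⟩ : ℕ → A), hmem.1⟩ := Subtype.ext e1
        rw [e2]
        have e3 := hFres φ' (ψ'.1 ⟨x, hx⟩ : ℕ → A) hmem
        rw [e3, ← hcomp ⟨x, hx⟩]
      have heq : F χ' = (F φ') ∘ (F ψ') :=
        S9.uniq_ext hZ hsync h1 χ' (F χ') ((F φ') ∘ (F ψ')) (hFcont χ') (hFres χ') hgc hgres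
      show F χ' y = F φ' (F ψ' y)
      rw [heq]
      rfl
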